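/- arXiv:1512.04237 — 2 statements merged into one kernel-verified Lean document; each statement's English description precedes it below -/
import Mathlib

section
/- (Mohar's growth bound) Let n ≥ 2 and let H be a subgroup of the free group F_n such that i(Γ_H) < 1. Then growth(Γ_H) ≥ (1 + i(Γ_H))/(1 − i(Γ_H)); equivalently, i(Γ_H) ≤ (growth(Γ_H) − 1)/(growth(Γ_H) + 1). -/
open Filter Real

noncomputable section

namespace JM

/-- The free group of rank `n`. -/
abbrev F (n : ℕ) := FreeGroup (Fin n)

/-- The Poincaré exponent of a subgroup `G` of the free group, with respect to the
word metric of the standard free generating set. -/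
def poincareExponent (n : ℕ) (G : Subgroup (F n)) : ℝ :=
  limsup (fun R : ℕ =>
    Real.log (Nat.card {g : F n // g ∈ G ∧ FreeGroup.norm g ≤ R}) / R) atTop

/-- `G` is of divergence type if its Poincaré series diverges at the exponent. -/
def DivergenceType (n : ℕ) (G : Subgroup (F n)) : Prop :=
  ¬ Summable (fun g : G => Real.exp (-(poincareExponent n G) * FreeGroup.norm (g : F n)))

/-- The vertex set of the quotient graph `Γ_H = T_n/H`: the right cosets `Hg`. -/
abbrev Cosets (n : ℕ) (H : Subgroup (F n)) := Quotient (QuotientGroup.rightRel H)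

/-- Right multiplication on right cosets: `Hg ↦ Hga`. -/
def rmul {n : ℕ} {H : Subgroup (F n)} (x : Cosets n H) (a : F n) : Cosets n H :=
  Quotient.liftOn x (fun g => Quotient.mk (QuotientGroup.rightRel H) (g * a))
    (fun b c h => Quotient.sound (by
      have h' := QuotientGroup.rightRel_apply.mp h
      show (QuotientGroup.rightRel H) _ _
      rw [QuotientGroup.rightRel_apply]
      simpa [mul_assoc] using h'))

/-- Distance from the base vertex `H` to the vertex `Hg` in the quotient graph,
namely `min_{h ∈ H} |hg|`. -/
def cosetDist {n : ℕ} {H : Subgroup (F n)} (x : Cosets n H) : ℕ :=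
  sInf (FreeGroup.norm '' {g : F n | Quotient.mk (QuotientGroup.rightRel H) g = x})

/-- The exponential growth rate of the quotient graph `Γ_H = T_n/H`. -/
def graphGrowth (n : ℕ) (H : Subgroup (F n)) : ℝ :=
  limsup (fun R : ℕ =>
    (Nat.card {x : Cosets n H // cosetDist x ≤ R} : ℝ) ^ (1 / (R : ℝ))) atTop

/-- the generators `S ∪ S⁻¹`, indexed by `Fin n × Bool`. -/
def sgen {n : ℕ} (p : Fin n × Bool) : F n :=
  if p.2 then FreeGroup.of p.1 else (FreeGroup.of p.1)⁻¹

/-- The number of boundary edges of a finite set `A` of vertices of `Γ_H`. -/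
def boundaryCard {n : ℕ} {H : Subgroup (F n)} (A : Finset (Cosets n H)) : ℕ :=
  Nat.card {p : Cosets n H × (Fin n × Bool) // p.1 ∈ A ∧ rmul p.1 (sgen p.2) ∉ A}

/-- The isoperimetric constant of the `2n`-regular graph `Γ_H`. -/
def isoConst (n : ℕ) (H : Subgroup (F n)) : ℝ :=
  sInf {r : ℝ | ∃ A : Finset (Cosets n H), A.Nonempty ∧
    r = (boundaryCard A : ℝ) / (2 * n * A.card)}

/-- The bottom of the spectrum of the discrete Laplacian on `Γ_H`, as the infimum of
Rayleigh quotients of finitely supported nonzero functions. -/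
def lambdaZero (n : ℕ) (H : Subgroup (F n)) : ℝ :=
  sInf {r : ℝ | ∃ f : Cosets n H → ℝ, (Function.support f).Finite ∧ f ≠ 0 ∧
    r = (∑ᶠ x, ∑ i : Fin n, (f x - f (rmul x (FreeGroup.of i))) ^ 2) /
        (2 * n * ∑ᶠ x, (f x) ^ 2)}

/-- The transition operator of the simple random walk on `Γ_H`. -/
def transOp {n : ℕ} {H : Subgroup (F n)} (f : Cosets n H → ℝ) (x : Cosets n H) : ℝ :=
  (1 / (2 * n)) * ∑ p : Fin n × Bool, f (rmul x (sgen p))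

/-- The spectral radius of the transition operator `P` of the simple random walk on
`Γ_N`: since `P` is bounded and self-adjoint on `ℓ²`, its spectral radius equals its
operator norm, i.e. the supremum of `‖Pf‖/‖f‖` over finitely supported nonzero `f`. -/
def specRad (n : ℕ) (H : Subgroup (F n)) : ℝ :=
  sSup {r : ℝ | ∃ f : Cosets n H → ℝ, (Function.support f).Finite ∧ f ≠ 0 ∧
    r = Real.sqrt (∑ᶠ x, (transOp f x) ^ 2) / Real.sqrt (∑ᶠ x, (f x) ^ 2)}


section Aux

variable {n : ℕ} {H : Subgroup (F n)}

/-- abbreviation for the quotient map onto right cosets -/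
private def mkc (H : Subgroup (F n)) (g : F n) : Cosets n H :=
  Quotient.mk (QuotientGroup.rightRel H) g

lemma rmul_mkc (g a : F n) : rmul (mkc H g) a = mkc H (g * a) := rfl

lemma rmul_rmul (x : Cosets n H) (a b : F n) : rmul (rmul x a) b = rmul x (a * b) := by
  induction x using Quotient.inductionOn with
  | h g =>
    show mkc H ((g * a) * b) = mkc H (g * (a * b))
    rw [mul_assoc]

lemma rmul_one (x : Cosets n H) : rmul x 1 = x := by
  induction x using Quotient.inductionOn with
  | h g =>
    show mkc H (g * 1) = mkc H g
    rw [mul_one]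

lemma rmul_cancel (x : Cosets n H) (a : F n) : rmul (rmul x a) a⁻¹ = x := by
  rw [rmul_rmul, mul_inv_cancel, rmul_one]

lemma cosetDist_mkc_le (g : F n) : cosetDist (mkc H g) ≤ FreeGroup.norm g :=
  Nat.sInf_le ⟨g, rfl, rfl⟩

lemma exists_min_rep (x : Cosets n H) :
    ∃ g : F n, mkc H g = x ∧ FreeGroup.norm g = cosetDist x := by
  have hne : (FreeGroup.norm ''
      {g : F n | Quotient.mk (QuotientGroup.rightRel H) g = x}).Nonempty := by
    obtain ⟨g, rfl⟩ := Quotient.exists_rep x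
    exact ⟨FreeGroup.norm g, g, rfl, rfl⟩
  obtain ⟨g, hg, hnorm⟩ := Nat.sInf_mem hne
  exact ⟨g, hg, hnorm⟩

lemma cosetDist_rmul_le (x : Cosets n H) (a : F n) :
    cosetDist (rmul x a) ≤ cosetDist x + FreeGroup.norm a := by
  obtain ⟨g, rfl, hg⟩ := exists_min_rep x
  calc cosetDist (rmul (mkc H g) a) ≤ FreeGroup.norm (g * a) := cosetDist_mkc_le _
    _ ≤ FreeGroup.norm g + FreeGroup.norm a := FreeGroup.norm_mul_le _ _
    _ = cosetDist (mkc H g) + FreeGroup.norm a := by rw [hg]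

/-- the inverse generator's index -/
def pinv (p : Fin n × Bool) : Fin n × Bool := (p.1, !p.2)

lemma sgen_pinv (p : Fin n × Bool) : sgen (n := n) (pinv p) = (sgen p)⁻¹ := by
  obtain ⟨i, b⟩ := p
  cases b <;> simp [sgen, pinv]

lemma pinv_injective : Function.Injective (pinv (n := n)) := by
  rintro ⟨i, b⟩ ⟨j, c⟩ h
  simp only [pinv, Prod.mk.injEq] at h
  obtain ⟨h1, h2⟩ := h
  cases b <;> cases c <;> simp_all

lemma norm_sgen (p : Fin n × Bool) : FreeGroup.norm (sgen p) = 1 := by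
  obtain ⟨i, b⟩ := p
  cases b <;> simp [sgen]

lemma cosetDist_rmul_sgen_le (x : Cosets n H) (p : Fin n × Bool) :
    cosetDist (rmul x (sgen p)) ≤ cosetDist x + 1 := by
  simpa [norm_sgen] using cosetDist_rmul_le x (sgen p)

/-- the canonical injection from the ball of the coset graph to the ball of the group -/
private def repMap (R : ℕ) (x : {x : Cosets n H // cosetDist x ≤ R}) :
    {g : F n // FreeGroup.norm g ≤ R} :=
  ⟨(exists_min_rep x.1).choose, by
    rw [(exists_min_rep x.1).choose_spec.2]; exact x.2⟩

lemma repMap_injective (R : ℕ) : Function.Injective (repMap (H := H) R) := by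
  intro a b h
  apply Subtype.ext
  rw [← (exists_min_rep a.1).choose_spec.1, ← (exists_min_rep b.1).choose_spec.1]
  exact congrArg (mkc H) (congrArg Subtype.val h)

private def wordMap (R : ℕ) (g : {g : F n // FreeGroup.norm g ≤ R}) :
    {l : List (Fin n × Bool) // l.length ≤ R} :=
  ⟨g.1.toWord, g.2⟩

lemma wordMap_injective (R : ℕ) : Function.Injective (wordMap (n := n) R) := by
  intro a b h
  exact Subtype.ext (FreeGroup.toWord_injective (congrArg Subtype.val h))

instance listBall_finite (R : ℕ) : Finite {l : List (Fin n × Bool) // l.length ≤ R} :=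
  (List.finite_length_le (Fin n × Bool) R).to_subtype

instance groupBall_finite (R : ℕ) : Finite {g : F n // FreeGroup.norm g ≤ R} :=
  Finite.of_injective _ (wordMap_injective (n := n) R)

instance cosetBall_finite (R : ℕ) : Finite {x : Cosets n H // cosetDist x ≤ R} :=
  Finite.of_injective _ (repMap_injective (H := H) R)

lemma ballSet_finite (H : Subgroup (F n)) (R : ℕ) :
    {x : Cosets n H | cosetDist x ≤ R}.Finite :=
  Set.finite_coe_iff.mp (cosetBall_finite R)

/-- the ball of radius `R` in the coset graph, as a finset -/
def ball (H : Subgroup (F n)) (R : ℕ) : Finset (Cosets n H) :=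
  (ballSet_finite H R).toFinset

lemma mem_ball {x : Cosets n H} {R : ℕ} : x ∈ ball H R ↔ cosetDist x ≤ R :=
  (ballSet_finite H R).mem_toFinset

lemma card_ball (R : ℕ) :
    Nat.card {x : Cosets n H // cosetDist x ≤ R} = (ball H R).card := by
  rw [← Nat.card_eq_finsetCard]
  exact Nat.card_congr (Equiv.subtypeEquivRight (fun x => mem_ball.symm))

lemma ball_nonempty (R : ℕ) : (ball H R).Nonempty := by
  refine ⟨mkc H 1, mem_ball.mpr ?_⟩
  have := cosetDist_mkc_le (H := H) 1
  simpa using le_trans this (Nat.zero_le R)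

lemma boundary_finite (A : Finset (Cosets n H)) :
    Finite {p : Cosets n H × (Fin n × Bool) // p.1 ∈ A ∧ rmul p.1 (sgen p.2) ∉ A} := by
  apply Finite.of_injective
    (fun p => ((⟨p.1.1, p.2.1⟩ : {x // x ∈ A}), p.1.2))
  intro a b h
  simp only [Prod.mk.injEq, Subtype.mk.injEq] at h
  exact Subtype.ext (Prod.ext h.1 h.2)

/-- The key counting lemma: boundary edges of balls of radii `R` and `R+1` inject
into (sphere at radius `R+1`) × generators. -/
lemma count_key (R : ℕ) :
    boundaryCard (ball H R) + boundaryCard (ball H (R + 1)) + 2 * n * (ball H R).card ≤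
      2 * n * (ball H (R + 1)).card := by
  classical
  set A := ball H R with hA
  set A' := ball H (R + 1) with hA'
  have hsub : A ⊆ A' := fun x hx => mem_ball.mpr (le_trans (mem_ball.mp hx) (Nat.le_succ R))
  set S : Finset (Cosets n H) := A' \ A with hS
  suffices hmain : boundaryCard A + boundaryCard A' ≤ 2 * n * S.card by
    have hcard : S.card + A.card = A'.card := Finset.card_sdiff_add_card_eq_card hsub
    have h2 : 2 * n * S.card + 2 * n * A.card = 2 * n * A'.card := by
      rw [← Nat.mul_add, hcard]
    omega
  -- the two boundary types
  set PA := {p : Cosets n H × (Fin n × Bool) // p.1 ∈ A ∧ rmul p.1 (sgen p.2) ∉ A}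
  set PA' := {p : Cosets n H × (Fin n × Bool) // p.1 ∈ A' ∧ rmul p.1 (sgen p.2) ∉ A'}
  haveI : Finite PA := boundary_finite A
  haveI : Finite PA' := boundary_finite A'
  -- the injection
  have hf : ∀ p : PA, rmul p.1.1 (sgen p.1.2) ∈ S := by
    rintro ⟨⟨x, s⟩, hx, hxs⟩
    rw [hS, Finset.mem_sdiff]
    constructor
    · refine mem_ball.mpr ?_
      calc cosetDist (rmul x (sgen s)) ≤ cosetDist x + 1 := cosetDist_rmul_sgen_le x s
        _ ≤ R + 1 := Nat.add_le_add_right (mem_ball.mp hx) 1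
    · exact hxs
  have hg : ∀ p : PA', p.1.1 ∈ S := by
    rintro ⟨⟨x, s⟩, hx, hxs⟩
    rw [hS, Finset.mem_sdiff]
    refine ⟨hx, fun hmem => hxs ?_⟩
    refine mem_ball.mpr ?_
    calc cosetDist (rmul x (sgen s)) ≤ cosetDist x + 1 := cosetDist_rmul_sgen_le x s
      _ ≤ R + 1 := Nat.add_le_add_right (mem_ball.mp hmem) 1
  set φ : PA ⊕ PA' → {y // y ∈ S} × (Fin n × Bool) :=
    Sum.elim (fun p => (⟨rmul p.1.1 (sgen p.1.2), hf p⟩, pinv p.1.2))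
      (fun p => (⟨p.1.1, hg p⟩, p.1.2)) with hφ
  have hinj : Function.Injective φ := by
    have hmixed : ∀ (p : PA) (q : PA'),
        (⟨rmul p.1.1 (sgen p.1.2), hf p⟩ : {y // y ∈ S}) = ⟨q.1.1, hg q⟩ →
        pinv p.1.2 = q.1.2 → False := by
      rintro ⟨⟨x, s⟩, hx, hxs⟩ ⟨⟨y, t⟩, hy, hys⟩ h1 h2
      have h1' : rmul x (sgen s) = y := congrArg Subtype.val h1
      have h2' : pinv s = t := h2
      apply hys
      have hyx : rmul y (sgen t) = x := by
        rw [← h2', ← h1', sgen_pinv, rmul_cancel]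
      show rmul (y, t).1 (sgen (y, t).2) ∈ A'
      rw [hyx]
      exact hsub hx
    rintro (p | p) (q | q) h
    · -- inl inl
      have h2 : pinv p.1.2 = pinv q.1.2 := congrArg Prod.snd h
      have hs : p.1.2 = q.1.2 := pinv_injective h2
      have h1 : rmul p.1.1 (sgen p.1.2) = rmul q.1.1 (sgen q.1.2) :=
        congrArg Subtype.val (congrArg Prod.fst h)
      have hx : p.1.1 = q.1.1 := by
        have := congrArg (fun z => rmul z (sgen p.1.2)⁻¹) h1
        simpa [hs, rmul_cancel] using this
      exact congrArg Sum.inl (Subtype.ext (Prod.ext hx hs))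
    · exact absurd h (fun h => hmixed p q (congrArg Prod.fst h) (congrArg Prod.snd h))
    · exact absurd h.symm (fun h => hmixed q p (congrArg Prod.fst h) (congrArg Prod.snd h))
    · -- inr inr
      have h1 : p.1.1 = q.1.1 := congrArg Subtype.val (congrArg Prod.fst h)
      have h2 := congrArg Prod.snd h
      exact congrArg Sum.inr (Subtype.ext (Prod.ext h1 h2))
  have hle := Nat.card_le_card_of_injective φ hinj
  rw [Nat.card_sum] at hle
  have htarget : Nat.card ({y // y ∈ S} × (Fin n × Bool)) = 2 * n * S.card := by
    rw [Nat.card_prod, Nat.card_eq_finsetCard]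
    simp only [Nat.card_eq_fintype_card, Fintype.card_prod, Fintype.card_fin,
      Fintype.card_bool]
    ring
  rw [htarget] at hle
  exact hle

lemma iso_nonneg (n : ℕ) (H : Subgroup (F n)) : 0 ≤ isoConst n H := by
  apply Real.sInf_nonneg
  rintro r ⟨A, hA, rfl⟩
  positivity

lemma iso_le (hn : 0 < n) (R : ℕ) :
    isoConst n H * (2 * n * (ball H R).card) ≤ boundaryCard (ball H R) := by
  have hpos : (0 : ℝ) < 2 * n * (ball H R).card := by
    have h1 : 0 < (ball H R).card := Finset.card_pos.mpr (ball_nonempty R)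
    positivity
  have hmem : (boundaryCard (ball H R) : ℝ) / (2 * n * (ball H R).card) ∈
      {r : ℝ | ∃ A : Finset (Cosets n H), A.Nonempty ∧
        r = (boundaryCard A : ℝ) / (2 * n * A.card)} :=
    ⟨ball H R, ball_nonempty R, rfl⟩
  have hbdd : BddBelow {r : ℝ | ∃ A : Finset (Cosets n H), A.Nonempty ∧
      r = (boundaryCard A : ℝ) / (2 * n * A.card)} := by
    refine ⟨0, ?_⟩
    rintro r ⟨A, hA, rfl⟩
    positivity
  have hle : isoConst n H ≤ (boundaryCard (ball H R) : ℝ) / (2 * n * (ball H R).card) :=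
    csInf_le hbdd hmem
  exact (le_div_iff₀ hpos).mp hle

/-- the growth recursion: `q * b R ≤ b (R+1)` where `q = (1+i)/(1-i)`. -/
lemma ball_growth (hn : 0 < n) (hi : isoConst n H < 1) (R : ℕ) :
    (1 + isoConst n H) / (1 - isoConst n H) * (ball H R).card ≤ (ball H (R + 1)).card := by
  set i := isoConst n H with hidef
  have hi1 : (0 : ℝ) < 1 - i := by linarith
  rw [div_mul_eq_mul_div, div_le_iff₀ hi1]
  have h1 := iso_le (H := H) hn R
  have h2 := iso_le (H := H) hn (R + 1)
  have h3 := count_key (H := H) R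
  have h3' : (boundaryCard (ball H R) : ℝ) + boundaryCard (ball H (R + 1)) +
      2 * n * (ball H R).card ≤ 2 * n * (ball H (R + 1)).card := by
    exact_mod_cast h3
  have hn' : (0 : ℝ) < 2 * n := by positivity
  nlinarith [h1, h2, h3']

lemma ball_card_lower (hn : 0 < n) (hi : isoConst n H < 1) (R : ℕ) :
    ((1 + isoConst n H) / (1 - isoConst n H)) ^ R ≤ ((ball H R).card : ℝ) := by
  set q := (1 + isoConst n H) / (1 - isoConst n H) with hq
  have hq0 : 0 ≤ q := by
    apply div_nonneg
    · have := iso_nonneg n H; linarith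
    · linarith
  induction R with
  | zero =>
    have : 1 ≤ (ball H 0).card := Finset.card_pos.mpr (ball_nonempty 0)
    simpa using (by exact_mod_cast this : (1 : ℝ) ≤ ((ball H 0).card : ℝ))
  | succ R ih =>
    calc q ^ (R + 1) = q * q ^ R := by ring
      _ ≤ q * (ball H R).card := by
          exact mul_le_mul_of_nonneg_left ih hq0
      _ ≤ ((ball H (R + 1)).card : ℝ) := ball_growth hn hi R

lemma list_ball_card (α : Type*) [Fintype α] (R : ℕ) :
    Nat.card {l : List α // l.length ≤ R} ≤ (Fintype.card α + 1) ^ R := by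
  induction R with
  | zero =>
    have hinj : Function.Injective (fun _ : {l : List α // l.length ≤ 0} => PUnit.unit.{1}) := by
      rintro ⟨l1, h1⟩ ⟨l2, h2⟩ _
      apply Subtype.ext
      show l1 = l2
      rw [List.length_eq_zero_iff.mp (Nat.le_zero.mp h1), List.length_eq_zero_iff.mp (Nat.le_zero.mp h2)]
    have := Nat.card_le_card_of_injective _ hinj
    simpa using this
  | succ R ih =>
    haveI : Finite {l : List α // l.length ≤ R} :=
      (List.finite_length_le α R).to_subtype
    set f : {l : List α // l.length ≤ R + 1} → Option α × {l : List α // l.length ≤ R} :=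
      fun l => (l.1.head?, ⟨l.1.tail, by
        have := l.2
        have ht : l.1.tail.length = l.1.length - 1 := List.length_tail
        omega⟩) with hf
    have hinj : Function.Injective f := by
      rintro ⟨l1, h1⟩ ⟨l2, h2⟩ h
      have hh : l1.head? = l2.head? := congrArg Prod.fst h
      have ht : l1.tail = l2.tail := congrArg Subtype.val (congrArg Prod.snd h)
      apply Subtype.ext
      cases l1 with
      | nil => cases l2 with
        | nil => rfl
        | cons a t => simp at hh
      | cons a t => cases l2 with
        | nil => simp at hh
        | cons b u =>
          simp only [List.head?_cons, Option.some.injEq] at hh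
          simp only [List.tail_cons] at ht
          show a :: t = b :: u
          rw [hh, ht]
    have hle := Nat.card_le_card_of_injective f hinj
    have htarget : Nat.card (Option α × {l : List α // l.length ≤ R}) =
        (Fintype.card α + 1) * Nat.card {l : List α // l.length ≤ R} := by
      rw [Nat.card_prod]
      congr 1
      simp [Nat.card_eq_fintype_card]
    rw [htarget] at hle
    calc Nat.card {l : List α // l.length ≤ R + 1} ≤
        (Fintype.card α + 1) * Nat.card {l : List α // l.length ≤ R} := hle
      _ ≤ (Fintype.card α + 1) * (Fintype.card α + 1) ^ R :=
          Nat.mul_le_mul_left _ ih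
      _ = (Fintype.card α + 1) ^ (R + 1) := by ring

lemma ball_card_upper (R : ℕ) : (ball H R).card ≤ (2 * n + 1) ^ R := by
  rw [← card_ball]
  calc Nat.card {x : Cosets n H // cosetDist x ≤ R} ≤
      Nat.card {g : F n // FreeGroup.norm g ≤ R} :=
        Nat.card_le_card_of_injective _ (repMap_injective R)
    _ ≤ Nat.card {l : List (Fin n × Bool) // l.length ≤ R} :=
        Nat.card_le_card_of_injective _ (wordMap_injective R)
    _ ≤ (Fintype.card (Fin n × Bool) + 1) ^ R := list_ball_card _ R
    _ = (2 * n + 1) ^ R := by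
        congr 1
        simp [Fintype.card_prod]
        ring

end Aux

/-- Mohar's growth bound: For a subgroup `H ≤ F_n` (`n ≥ 2`) with
`i(Γ_H) < 1`, one has `growth(Γ_H) ≥ (1 + i(Γ_H))/(1 − i(Γ_H))`; equivalently
`i(Γ_H) ≤ (growth(Γ_H) − 1)/(growth(Γ_H) + 1)`. -/
theorem stmt8 (n : ℕ) (hn : 2 ≤ n) (H : Subgroup (F n)) (hi : isoConst n H < 1) :
    graphGrowth n H ≥ (1 + isoConst n H) / (1 - isoConst n H) ∧
    isoConst n H ≤ (graphGrowth n H - 1) / (graphGrowth n H + 1) := by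
  have hn0 : 0 < n := by omega
  have hi0 : 0 ≤ isoConst n H := iso_nonneg n H
  set i := isoConst n H with hidef
  set q := (1 + i) / (1 - i) with hq
  have hi1 : (0 : ℝ) < 1 - i := by linarith
  have hq0 : 0 ≤ q := by positivity
  have hq1 : 1 ≤ q := by
    rw [hq, le_div_iff₀ hi1]; linarith
  set u : ℕ → ℝ := fun R =>
    (Nat.card {x : Cosets n H // cosetDist x ≤ R} : ℝ) ^ (1 / (R : ℝ)) with hu
  have hcard : ∀ R : ℕ, (Nat.card {x : Cosets n H // cosetDist x ≤ R} : ℝ) =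
      ((ball H R).card : ℝ) := by
    intro R; exact_mod_cast congrArg Nat.cast (card_ball (H := H) R)
  -- boundedness above
  have hboundall : ∀ R, u R ≤ 2 * (n : ℝ) + 1 := by
    intro R
    have hC1 : (1 : ℝ) ≤ 2 * (n : ℝ) + 1 := by
      have : (0 : ℝ) ≤ (n : ℝ) := Nat.cast_nonneg n
      linarith
    rcases Nat.eq_zero_or_pos R with h0 | hR
    · subst h0
      simp only [hu, Nat.cast_zero, div_zero, Real.rpow_zero]
      exact hC1
    · have hb : ((ball H R).card : ℝ) ≤ (2 * (n : ℝ) + 1) ^ R := by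
        have := ball_card_upper (H := H) R
        calc ((ball H R).card : ℝ) ≤ (((2 * n + 1) ^ R : ℕ) : ℝ) := by exact_mod_cast this
          _ = (2 * (n : ℝ) + 1) ^ R := by push_cast; ring
      have hRpos : (0 : ℝ) < (R : ℝ) := by exact_mod_cast hR
      have h1R : 0 ≤ 1 / (R : ℝ) := by positivity
      calc u R = ((ball H R).card : ℝ) ^ (1 / (R : ℝ)) := by rw [hu]; simp only [hcard R]
        _ ≤ ((2 * (n : ℝ) + 1) ^ R) ^ (1 / (R : ℝ)) :=
            Real.rpow_le_rpow (by positivity) hb h1R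
        _ = (2 * (n : ℝ) + 1) ^ ((R : ℝ) * (1 / (R : ℝ))) := by
            rw [← Real.rpow_natCast (2 * (n : ℝ) + 1) R, ← Real.rpow_mul (by positivity)]
        _ = 2 * (n : ℝ) + 1 := by
            rw [mul_one_div_cancel (ne_of_gt hRpos), Real.rpow_one]
  have hbdd : Filter.IsBoundedUnder (· ≤ ·) atTop u :=
    Filter.isBoundedUnder_of ⟨2 * (n : ℝ) + 1, hboundall⟩
  -- eventual lower bound
  have hev : ∀ R : ℕ, 1 ≤ R → q ≤ u R := by
    intro R hR
    have hRpos : (0 : ℝ) < (R : ℝ) := by exact_mod_cast hR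
    have hlow : q ^ R ≤ ((ball H R).card : ℝ) := ball_card_lower hn0 hi R
    calc q = q ^ ((R : ℝ) * (1 / (R : ℝ))) := by
          rw [mul_one_div_cancel (ne_of_gt hRpos), Real.rpow_one]
      _ = (q ^ R) ^ (1 / (R : ℝ)) := by
          rw [← Real.rpow_natCast q R, ← Real.rpow_mul hq0]
      _ ≤ ((ball H R).card : ℝ) ^ (1 / (R : ℝ)) :=
          Real.rpow_le_rpow (by positivity) hlow (by positivity)
      _ = u R := by rw [hu]; simp only [hcard R]
  have hG : q ≤ graphGrowth n H := by
    rw [graphGrowth]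
    exact le_limsup_of_frequently_le
      ((Filter.eventually_atTop.mpr ⟨1, hev⟩).frequently) hbdd
  have hG1 : 1 ≤ graphGrowth n H := le_trans hq1 hG
  constructor
  · exact hG
  · have hq' : 1 + i ≤ graphGrowth n H * (1 - i) := by
      rw [hq, div_le_iff₀ hi1] at hG
      linarith
    rw [le_div_iff₀ (by linarith : (0 : ℝ) < graphGrowth n H + 1)]
    nlinarith

end JM
end
end

section
/- The isoperimetric constant of the 2n-regular tree T_n (the Cayley graph of the free group F_n, n ≥ 2, with respect to a free generating set S) equals (n−1)/n; that is, inf over all finite nonempty subsets A of F_n of (1/(2n))·#{(g,s) : g ∈ A, s ∈ S ∪ S^{−1}, gs ∉ A}/card(A) = (n−1)/n. -/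
open Filter Real

noncomputable section

namespace JM

section Aux
variable {n : ℕ}

lemma sgen_eq_mk {n : ℕ} (p : Fin n × Bool) : sgen p = FreeGroup.mk [p] := by
  obtain ⟨a, b⟩ := p
  cases b <;> simp [sgen, FreeGroup.of, FreeGroup.inv_mk, FreeGroup.invRev]

lemma sgen_inv {n : ℕ} (p : Fin n × Bool) : (sgen p)⁻¹ = sgen (p.1, !p.2) := by
  obtain ⟨a, b⟩ := p
  cases b <;> simp [sgen]

open FreeGroup in
lemma norm_mk_eq {n : ℕ} (L : List (Fin n × Bool)) :
    FreeGroup.norm (FreeGroup.mk L) = (reduce L).length := by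
  show (toWord (mk L)).length = _
  rw [toWord_mk]

open FreeGroup in
lemma norm_mul_sgen {n : ℕ} (g : F n) (p : Fin n × Bool) :
    (FreeGroup.norm (g * sgen p) = FreeGroup.norm g + 1 ∧ (g⁻¹).toWord.head? ≠ some p)
    ∨ (FreeGroup.norm (g * sgen p) + 1 = FreeGroup.norm g ∧ (g⁻¹).toWord.head? = some p) := by
  have hinv : (g * sgen p)⁻¹ = FreeGroup.mk ((p.1, !p.2) :: (g⁻¹).toWord) := by
    rw [mul_inv_rev, sgen_inv, sgen_eq_mk, ← mk_toWord (x := g⁻¹), FreeGroup.mul_mk,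
      mk_toWord, List.singleton_append]
  have hn : FreeGroup.norm (g * sgen p) = (reduce ((p.1, !p.2) :: (g⁻¹).toWord)).length := by
    rw [← norm_inv_eq, hinv, norm_mk_eq]
  have hg : FreeGroup.norm g = (g⁻¹).toWord.length := by
    rw [← norm_inv_eq]; rfl
  have hred : reduce ((g⁻¹).toWord) = (g⁻¹).toWord := reduce_toWord _
  rw [reduce.cons, hred] at hn
  rcases hu : (g⁻¹).toWord with _ | ⟨hd, tl⟩
  · left
    rw [hu] at hn hg
    simp only [List.length_cons, List.length_nil] at hn hg
    exact ⟨by omega, by simp [hu]⟩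
  · rw [hu] at hn hg
    have hn2 : FreeGroup.norm (g * sgen p) =
        (if (p.1, !p.2).1 = hd.1 ∧ (p.1, !p.2).2 = !hd.2 then tl
         else (p.1, !p.2) :: hd :: tl).length := hn
    clear hn
    by_cases hpd : hd = p
    · right
      subst hpd
      rw [if_pos ⟨rfl, by simp⟩] at hn2
      refine ⟨?_, rfl⟩
      simp only [List.length_cons] at hg
      omega
    · left
      have hc : ¬((p.1, !p.2).1 = hd.1 ∧ (p.1, !p.2).2 = !hd.2) := by
        intro ⟨h1, h2⟩
        apply hpd
        obtain ⟨a, b⟩ := p; obtain ⟨c, d⟩ := hd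
        simp only at h1 h2
        simp_all
      rw [if_neg hc] at hn2
      refine ⟨?_, ?_⟩
      · simp only [List.length_cons] at hn2 hg
        omega
      · simp only [List.head?_cons, Ne, Option.some.injEq]
        exact fun h => hpd h

open FreeGroup in
lemma descent_iff {n : ℕ} (g : F n) (p : Fin n × Bool) :
    FreeGroup.norm (g * sgen p) < FreeGroup.norm g ↔ (g⁻¹).toWord.head? = some p := by
  rcases norm_mul_sgen g p with ⟨h1, h2⟩ | ⟨h1, h2⟩
  · exact ⟨fun h => by omega, fun h => absurd h h2⟩
  · exact ⟨fun _ => h2, fun _ => by omega⟩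

open FreeGroup in
lemma descent_unique {n : ℕ} (g : F n) {p q : Fin n × Bool}
    (hp : FreeGroup.norm (g * sgen p) < FreeGroup.norm g)
    (hq : FreeGroup.norm (g * sgen q) < FreeGroup.norm g) : p = q := by
  rw [descent_iff] at hp hq
  rw [hp] at hq
  exact Option.some_injective _ hq

open FreeGroup in
lemma ascent_eq {n : ℕ} (g : F n) (p : Fin n × Bool)
    (h : ¬ FreeGroup.norm (g * sgen p) < FreeGroup.norm g) :
    FreeGroup.norm (g * sgen p) = FreeGroup.norm g + 1 := by
  rcases norm_mul_sgen g p with ⟨h1, _⟩ | ⟨h1, _⟩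
  · exact h1
  · omega

open Classical in
lemma ncard_eq (A : Finset (F n)) :
    Nat.card {p : F n × (Fin n × Bool) // p.1 ∈ A ∧ p.1 * sgen p.2 ∉ A}
      = ((A ×ˢ (Finset.univ : Finset (Fin n × Bool))).filter
          (fun p => p.1 * sgen p.2 ∉ A)).card := by
  classical
  rw [← Nat.card_eq_finsetCard]
  apply Nat.card_congr
  apply Equiv.subtypeEquivRight
  intro p
  simp [Finset.mem_filter, Finset.mem_product]

open Classical in
lemma split_eq (A : Finset (F n)) :
    ((A ×ˢ (Finset.univ : Finset (Fin n × Bool))).filter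
        (fun p => p.1 * sgen p.2 ∉ A)).card
      + ((A ×ˢ (Finset.univ : Finset (Fin n × Bool))).filter
        (fun p => p.1 * sgen p.2 ∈ A)).card = 2 * n * A.card := by
  classical
  have h := Finset.card_filter_add_card_filter_not
    (s := A ×ˢ (Finset.univ : Finset (Fin n × Bool)))
    (p := fun p => p.1 * sgen p.2 ∈ A)
  have h2 : ((A ×ˢ (Finset.univ : Finset (Fin n × Bool))).filter
      (fun p => ¬ p.1 * sgen p.2 ∈ A)) = ((A ×ˢ (Finset.univ : Finset (Fin n × Bool))).filter
      (fun p => p.1 * sgen p.2 ∉ A)) := by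
    apply Finset.filter_congr
    intro p _
    rfl
  rw [h2] at h
  rw [add_comm, h, Finset.card_product, Finset.card_univ]
  simp only [Fintype.card_prod, Fintype.card_fin, Fintype.card_bool]
  ring

open Classical in
lemma internal_le (A : Finset (F n)) :
    ((A ×ˢ (Finset.univ : Finset (Fin n × Bool))).filter
        (fun p => p.1 * sgen p.2 ∈ A)).card ≤ 2 * A.card := by
  classical
  have h := Finset.card_le_card_of_injOn
    (s := (A ×ˢ (Finset.univ : Finset (Fin n × Bool))).filter
        (fun p => p.1 * sgen p.2 ∈ A))
    (t := A ×ˢ (Finset.univ : Finset Bool))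
    (fun q => if FreeGroup.norm (q.1 * sgen q.2) < FreeGroup.norm q.1
      then (q.1, true) else (q.1 * sgen q.2, false))
    (by
      intro q hq
      simp only [Finset.mem_coe, Finset.mem_filter, Finset.mem_product] at hq
      show (if FreeGroup.norm (q.1 * sgen q.2) < FreeGroup.norm q.1
        then (q.1, true) else (q.1 * sgen q.2, false)) ∈ A ×ˢ (Finset.univ : Finset Bool)
      split
      · simp [hq.1.1]
      · simp [hq.2])
    (by
      intro q hq q' hq' hf
      simp only [Finset.coe_filter, Set.mem_setOf_eq, Finset.mem_product] at hq hq'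
      by_cases h1 : FreeGroup.norm (q.1 * sgen q.2) < FreeGroup.norm q.1 <;>
      by_cases h2 : FreeGroup.norm (q'.1 * sgen q'.2) < FreeGroup.norm q'.1 <;>
        simp only [h1, h2, if_true, if_false, Prod.mk.injEq] at hf
      · obtain ⟨he, -⟩ := hf
        rw [← he] at h2
        exact Prod.ext he (descent_unique q.1 h1 h2)
      · exact absurd hf.2 (by simp)
      · exact absurd hf.2 (by simp)
      · have e1 := ascent_eq q.1 q.2 h1
        have e2 := ascent_eq q'.1 q'.2 h2
        obtain ⟨he, -⟩ := hf
        have hd1 : FreeGroup.norm ((q.1 * sgen q.2) * sgen (q.2.1, !q.2.2))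
            < FreeGroup.norm (q.1 * sgen q.2) := by
          rw [← sgen_inv, mul_inv_cancel_right]
          omega
        have hd2 : FreeGroup.norm ((q'.1 * sgen q'.2) * sgen (q'.2.1, !q'.2.2))
            < FreeGroup.norm (q'.1 * sgen q'.2) := by
          rw [← sgen_inv, mul_inv_cancel_right]
          omega
        rw [he] at hd1
        have hpq : (q.2.1, !q.2.2) = (q'.2.1, !q'.2.2) := descent_unique _ hd1 hd2
        rw [Prod.mk.injEq] at hpq
        have h22 : q.2 = q'.2 := Prod.ext hpq.1 (Bool.not_inj hpq.2)
        rw [h22] at he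
        exact Prod.ext (mul_right_cancel he) h22)
  calc _ ≤ (A ×ˢ (Finset.univ : Finset Bool)).card := h
    _ = 2 * A.card := by
      rw [Finset.card_product, Finset.card_univ, Fintype.card_bool]
      ring

lemma norm_pow (a : Fin n) (i : ℕ) : FreeGroup.norm ((FreeGroup.of a : F n) ^ i) = i := by
  show (FreeGroup.toWord _).length = i
  rw [FreeGroup.toWord_of_pow, List.length_replicate]

lemma pow_inj (a : Fin n) : Function.Injective (fun i : ℕ => (FreeGroup.of a : F n) ^ i) := by
  intro i j h
  have := congrArg FreeGroup.norm h
  simpa [norm_pow] using this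

open Classical in
lemma internal_ge (hn0 : 0 < n) (k : ℕ) (hk : 1 ≤ k) (A : Finset (F n))
    (hA : A = (Finset.range k).image (fun i => (FreeGroup.of (⟨0, hn0⟩ : Fin n)) ^ i)) :
    2 * (k - 1) ≤ ((A ×ˢ (Finset.univ : Finset (Fin n × Bool))).filter
        (fun p => p.1 * sgen p.2 ∈ A)).card := by
  classical
  set z : Fin n := ⟨0, hn0⟩
  set x : F n := FreeGroup.of z with hx
  have hmemA : ∀ i, i < k → x ^ i ∈ A := fun i hi =>
    hA ▸ Finset.mem_image.mpr ⟨i, Finset.mem_range.mpr hi, rfl⟩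
  have key := Finset.card_le_card_of_injOn
    (s := (Finset.range (k - 1)) ×ˢ (Finset.univ : Finset Bool))
    (t := (A ×ˢ (Finset.univ : Finset (Fin n × Bool))).filter
        (fun p => p.1 * sgen p.2 ∈ A))
    (fun q => bif q.2 then (x ^ q.1, (z, true)) else (x ^ (q.1 + 1), (z, false)))
    (by
      intro q hq
      simp only [Finset.mem_coe, Finset.mem_product, Finset.mem_range] at hq
      have hik : q.1 < k - 1 := hq.1
      have h1 : q.1 < k := by omega
      have h2 : q.1 + 1 < k := by omega
      show (bif q.2 then (x ^ q.1, (z, true)) else (x ^ (q.1 + 1), (z, false))) ∈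
        ((A ×ˢ (Finset.univ : Finset (Fin n × Bool))).filter (fun p => p.1 * sgen p.2 ∈ A))
      rcases q with ⟨i, b⟩
      cases b
      · simp only [Bool.cond_false, Finset.mem_filter, Finset.mem_product]
        refine ⟨⟨hmemA _ h2, Finset.mem_univ _⟩, ?_⟩
        have hs : sgen ((z, false) : Fin n × Bool) = x⁻¹ := by simp [sgen, hx]
        simpa [hs, pow_succ] using hmemA _ h1
      · simp only [Bool.cond_true, Finset.mem_filter, Finset.mem_product]
        refine ⟨⟨hmemA _ h1, Finset.mem_univ _⟩, ?_⟩
        have hs : sgen ((z, true) : Fin n × Bool) = x := by simp [sgen, hx]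
        rw [hs, ← pow_succ]
        exact hmemA _ h2)
    (by
      rintro ⟨i, b⟩ - ⟨j, b'⟩ - hf
      cases b <;> cases b' <;>
        simp only [Bool.cond_true, Bool.cond_false, Prod.mk.injEq] at hf
      · have := pow_inj z hf.1
        simp only [Prod.mk.injEq]
        exact ⟨by omega, trivial⟩
      · exact absurd hf.2.2 (by simp)
      · exact absurd hf.2.2 (by simp)
      · have := pow_inj z hf.1
        simp only [Prod.mk.injEq]
        exact ⟨by omega, trivial⟩)
  calc 2 * (k - 1) = ((Finset.range (k - 1)) ×ˢ (Finset.univ : Finset Bool)).card := by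
        rw [Finset.card_product, Finset.card_range, Finset.card_univ, Fintype.card_bool]
        ring
    _ ≤ _ := key


end Aux

/-- The isoperimetric constant of the `2n`-regular tree `T_n`
(the Cayley graph of `F_n`, `n ≥ 2`) equals `(n−1)/n`. -/
theorem stmt10 (n : ℕ) (hn : 2 ≤ n) :
    sInf {r : ℝ | ∃ A : Finset (F n), A.Nonempty ∧
      r = (Nat.card {p : F n × (Fin n × Bool) // p.1 ∈ A ∧ p.1 * sgen p.2 ∉ A} : ℝ) /
          (2 * n * A.card)} = (n - 1) / n := by
  have hn0 : 0 < n := by omega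
  have hnR : (2:ℝ) ≤ (n:ℝ) := by exact_mod_cast hn
  set T := {r : ℝ | ∃ A : Finset (F n), A.Nonempty ∧
      r = (Nat.card {p : F n × (Fin n × Bool) // p.1 ∈ A ∧ p.1 * sgen p.2 ∉ A} : ℝ) /
          (2 * n * A.card)} with hT
  -- lower bound
  have hlb : ∀ r ∈ T, ((n:ℝ) - 1) / n ≤ r := by
    rintro r ⟨A, hA, rfl⟩
    rw [ncard_eq]
    have hsplit := split_eq A
    have hint := internal_le A
    have hcard : 1 ≤ A.card := Finset.card_pos.mpr hA
    have hge : 2 * n * A.card ≤ ((A ×ˢ (Finset.univ : Finset (Fin n × Bool))).filter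
          (fun p => p.1 * sgen p.2 ∉ A)).card + 2 * A.card := by omega
    set b := ((A ×ˢ (Finset.univ : Finset (Fin n × Bool))).filter
          (fun p => p.1 * sgen p.2 ∉ A)).card
    have hgeR : 2 * (n:ℝ) * A.card ≤ (b:ℝ) + 2 * A.card := by exact_mod_cast hge
    have hcR : (1:ℝ) ≤ (A.card : ℝ) := by exact_mod_cast hcard
    have hd1 : (0:ℝ) < (n:ℝ) := by linarith
    have hd2 : (0:ℝ) < 2 * (n:ℝ) * A.card := by nlinarith
    rw [div_le_div_iff₀ hd1 hd2]
    nlinarith [mul_le_mul_of_nonneg_left hgeR (le_of_lt hd1)]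
  have hTne : T.Nonempty := by
    refine ⟨_, ⟨{1}, ⟨1, Finset.mem_singleton_self 1⟩, rfl⟩⟩
  have hbdd : BddBelow T := ⟨((n:ℝ) - 1) / n, hlb⟩
  -- upper bound family
  have hub : ∀ k : ℕ, 1 ≤ k → ∃ r ∈ T, r ≤ ((n:ℝ) - 1) / n + 1 / (n * k) := by
    intro k hk
    set A : Finset (F n) := (Finset.range k).image
      (fun i => (FreeGroup.of (⟨0, hn0⟩ : Fin n)) ^ i) with hA
    have hAne : A.Nonempty := ⟨(FreeGroup.of (⟨0, hn0⟩ : Fin n)) ^ 0,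
      Finset.mem_image.mpr ⟨0, Finset.mem_range.mpr (by omega), rfl⟩⟩
    have hAcard : A.card = k := by
      rw [hA, Finset.card_image_of_injective _ (pow_inj _), Finset.card_range]
    refine ⟨_, ⟨A, hAne, rfl⟩, ?_⟩
    rw [ncard_eq]
    have hsplit := split_eq A
    have hint := internal_ge hn0 k hk A hA
    set b := ((A ×ˢ (Finset.univ : Finset (Fin n × Bool))).filter
          (fun p => p.1 * sgen p.2 ∉ A)).card with hb
    have hble : b + 2 * (k - 1) ≤ 2 * n * k := by
      rw [hAcard] at hsplit
      omega
    have hbleR : (b:ℝ) ≤ 2 * n * k - 2 * k + 2 := by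
      have h1 : ((b + 2 * (k - 1) : ℕ) : ℝ) ≤ ((2 * n * k : ℕ) : ℝ) := by exact_mod_cast hble
      have h2 : ((k - 1 : ℕ) : ℝ) = (k:ℝ) - 1 := by
        rw [Nat.cast_sub hk, Nat.cast_one]
      push_cast [h2] at h1
      linarith
    rw [hAcard]
    have hkR : (1:ℝ) ≤ (k:ℝ) := by exact_mod_cast hk
    have hden : (0:ℝ) < 2 * (n:ℝ) * k := by nlinarith
    rw [div_le_iff₀ hden]
    have hexp : (((n:ℝ) - 1) / n + 1 / (n * k)) * (2 * (n:ℝ) * k) = 2 * n * k - 2 * k + 2 := by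
      field_simp
    rw [hexp]
    exact hbleR
  -- conclusion
  apply le_antisymm
  · apply le_of_forall_pos_le_add
    intro ε hε
    obtain ⟨k0, hk0⟩ := exists_nat_gt (1 / ε)
    set k := max k0 1 with hkdef
    have hk1 : 1 ≤ k := le_max_right _ _
    obtain ⟨r, hrT, hrle⟩ := hub k hk1
    have hkR : (1:ℝ) ≤ (k:ℝ) := by exact_mod_cast hk1
    have hnk : 1 / ε < (n:ℝ) * k := by
      have h1 : (k0:ℝ) ≤ (k:ℝ) := by exact_mod_cast le_max_left k0 1
      nlinarith
    have h1 : 1 / ((n:ℝ) * k) ≤ ε := by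
      have hepos : 0 < 1 / ε := by positivity
      have := one_div_lt_one_div_of_lt hepos hnk
      rw [one_div_one_div] at this
      linarith
    calc sInf T ≤ r := csInf_le hbdd hrT
      _ ≤ ((n:ℝ) - 1) / n + 1 / (n * k) := hrle
      _ ≤ ((n:ℝ) - 1) / n + ε := by linarith
  · exact le_csInf hTne hlb


end JM
end
end
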